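/- arXiv:2507.02918 — 7 statements merged into one kernel-verified Lean document; each statement's English description precedes it below -/
import Mathlib

section
/- If x and y are preimputations such that x outvotes y via some coalition S (i.e., e_S(x) ≥ 0, x_i > y_i for all i ∈ S, and x(T) ≥ v(T) for all coalitions T not contained in S), then the set of coalitions with positive excess at x is contained in the set of coalitions with positive excess at y, and moreover every coalition with positive excess at x has strictly smaller excess at x than at y. -/
open Finset
open scoped RealInnerProductSpace

noncomputable section
variable {N : Type*} [Fintype N] [DecidableEq N]

/-- Indicator vector of a coalition. -/
def indic (S : Finset N) : EuclideanSpace ℝ N := WithLp.toLp 2 (fun i => if i ∈ S then (1:ℝ) else 0)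

/-- η^S = 1^S - (s/n)·1^N. -/
def eta (S : Finset N) : EuclideanSpace ℝ N :=
  WithLp.toLp 2 (fun i => (if i ∈ S then (1:ℝ) else 0) - (S.card : ℝ) / (Fintype.card N))

/-- Excess e_S(x) = v(S) - x(S). -/
def excess (v : Finset N → ℝ) (S : Finset N) (x : EuclideanSpace ℝ N) : ℝ :=
  v S - ∑ i ∈ S, x i

/-- Dissatisfaction field ϑ. -/
def dissat (v : Finset N → ℝ) (x : EuclideanSpace ℝ N) : ℝ :=
  (1/2) * ∑ S ∈ univ.filter (· ≠ (∅ : Finset N)), (max 0 (excess v S x))^2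

/-- Cohesion field φ. -/
def phi (v : Finset N → ℝ) (x : EuclideanSpace ℝ N) : EuclideanSpace ℝ N :=
  ∑ S ∈ univ.filter (· ≠ (∅ : Finset N)), max 0 (excess v S x) • eta S

/-- The core. -/
def core (v : Finset N → ℝ) : Set (EuclideanSpace ℝ N) :=
  {x | (∑ i, x i) = 0 ∧ ∀ S : Finset N, S.Nonempty → excess v S x ≤ 0}

/-- A balanced collection of (nonempty) coalitions. -/
def IsBalancedColl (B : Finset (Finset N)) : Prop :=
  (∀ S ∈ B, S.Nonempty) ∧
    ∃ lam : Finset N → ℝ, (∀ S ∈ B, 0 < lam S) ∧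
      ∑ S ∈ B, lam S • indic S = indic (univ : Finset N)

/-- Outvoting relation. -/
def Outvotes (v : Finset N → ℝ) (x y : EuclideanSpace ℝ N) : Prop :=
  ∃ S : Finset N, S.Nonempty ∧ 0 ≤ excess v S x ∧ (∀ i ∈ S, y i < x i) ∧
    ∀ T : Finset N, T.Nonempty → ¬ T ⊆ S → v T ≤ ∑ i ∈ T, x i

theorem stmt_4 (v : Finset N → ℝ) (hv : v univ = 0) (x y : EuclideanSpace ℝ N)
    (hx : (∑ i, x i) = 0) (hy : (∑ i, y i) = 0) (S : Finset N) (hS : S.Nonempty)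
    (h1 : 0 ≤ excess v S x) (h2 : ∀ i ∈ S, y i < x i)
    (h3 : ∀ T : Finset N, T.Nonempty → ¬ T ⊆ S → v T ≤ ∑ i ∈ T, x i) :
    ∀ T : Finset N, T.Nonempty → 0 < excess v T x →
      0 < excess v T y ∧ excess v T x < excess v T y := by
  intro T hT hTx
  have hTS : T ⊆ S := by
    by_contra hns
    have := h3 T hT hns
    simp only [excess] at hTx
    linarith
  have hsum : ∑ i ∈ T, y i < ∑ i ∈ T, x i :=
    Finset.sum_lt_sum_of_nonempty hT (fun i hi => h2 i (hTS hi))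
  simp only [excess] at *
  constructor <;> linarith
end
end

section
/- If x and y are preimputations such that x outvotes y, then ϑ(x) ≤ ϑ(y), where ϑ is the dissatisfaction field. -/
open Finset
open scoped RealInnerProductSpace

noncomputable section
variable {N : Type*} [Fintype N] [DecidableEq N]

theorem stmt_5 (v : Finset N → ℝ) (hv : v univ = 0) (x y : EuclideanSpace ℝ N)
    (hx : (∑ i, x i) = 0) (hy : (∑ i, y i) = 0) (hxy : Outvotes v x y) :
    dissat v x ≤ dissat v y := by
  obtain ⟨S, hSne, hSex, hdom, hout⟩ := hxy
  unfold dissat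
  gcongr (1/2) * ?_
  apply Finset.sum_le_sum
  intro T hT
  simp only [Finset.mem_filter] at hT
  have hTne : T.Nonempty := Finset.nonempty_iff_ne_empty.mpr hT.2
  have key : max 0 (excess v T x) ≤ max 0 (excess v T y) := by
    by_cases hTS : T ⊆ S
    · have hsum : ∑ i ∈ T, y i ≤ ∑ i ∈ T, x i :=
        Finset.sum_le_sum fun i hi => (hdom i (hTS hi)).le
      have : excess v T x ≤ excess v T y := by
        unfold excess; linarith
      exact max_le_max le_rfl this
    · have : excess v T x ≤ 0 := by
        have := hout T hTne hTS
        unfold excess; linarith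
      simp [max_eq_left this, le_max_left]
  have h0 : 0 ≤ max 0 (excess v T x) := le_max_left _ _
  exact pow_le_pow_left₀ h0 key 2
end
end

section
/- For any balanced game (N, v) with v(N)=0 and any preimputation x not in the core C(v), the collection φ(x) = {S : e_S(x) > 0} is nonempty and unbalanced (i.e., it contains no balanced subcollection). -/
open Finset
open scoped RealInnerProductSpace

noncomputable section
variable {N : Type*} [Fintype N] [DecidableEq N]

lemma key_sum {B : Finset (Finset N)} {lam : Finset N → ℝ}
    (hsum : ∑ S ∈ B, lam S • indic S = indic (univ : Finset N))
    (z : EuclideanSpace ℝ N) :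
    ∑ S ∈ B, lam S * ∑ i ∈ S, z i = ∑ i, z i := by
  have hfun : ∀ i, ∑ S ∈ B, lam S * indic S i = 1 := by
    intro i
    have h1 := congrArg (fun w : EuclideanSpace ℝ N => w i) hsum
    have h2 : (∑ S ∈ B, lam S • indic S) i = ∑ S ∈ B, (lam S • indic S) i :=
      by rw [WithLp.ofLp_sum, Finset.sum_apply]
    rw [h2] at h1
    simpa [indic, smul_eq_mul] using h1
  calc ∑ S ∈ B, lam S * ∑ i ∈ S, z i
      = ∑ S ∈ B, ∑ i, lam S * (indic S i * z i) := by
        refine Finset.sum_congr rfl fun S _ => ?_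
        simp [indic, mul_ite, ite_mul, mul_zero, Finset.mul_sum, Finset.sum_ite_mem]
    _ = ∑ i, (∑ S ∈ B, lam S * indic S i) * z i := by
        rw [Finset.sum_comm]
        refine Finset.sum_congr rfl fun i _ => ?_
        rw [Finset.sum_mul]; exact Finset.sum_congr rfl fun _ _ => by ring
    _ = ∑ i, z i := by simp [hfun]

theorem stmt_7 [Nonempty N] (v : Finset N → ℝ) (hv : v univ = 0)
    (hbal : (core v).Nonempty) (x : EuclideanSpace ℝ N) (hx : (∑ i, x i) = 0)
    (hxc : x ∉ core v) :
    (∃ S : Finset N, S.Nonempty ∧ 0 < excess v S x) ∧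
      ∀ B : Finset (Finset N), (∀ S ∈ B, S.Nonempty ∧ 0 < excess v S x) →
        ¬ IsBalancedColl B := by
  constructor
  · simp only [core, Set.mem_setOf_eq, not_and, not_forall] at hxc
    obtain ⟨S, hS, hle⟩ := hxc hx
    exact ⟨S, hS, not_le.mp hle⟩
  · rintro B hB ⟨hne, lam, hpos, hsum⟩
    obtain ⟨y, hy0, hyc⟩ := hbal
    have hBne : B.Nonempty := by
      rcases Finset.eq_empty_or_nonempty B with h | h
      · exfalso
        obtain ⟨i⟩ := ‹Nonempty N›
        have := congrArg (fun w : EuclideanSpace ℝ N => w i) hsum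
        simp [h, indic] at this
      · exact h
    have hx' : ∑ S ∈ B, lam S * ∑ i ∈ S, x i = 0 := (key_sum hsum x).trans hx
    have hy' : ∑ S ∈ B, lam S * ∑ i ∈ S, y i = 0 := (key_sum hsum y).trans hy0
    have hpos' : 0 < ∑ S ∈ B, lam S * excess v S x := by
      apply Finset.sum_pos
      · intro S hS
        exact mul_pos (hpos S hS) (hB S hS).2
      · exact hBne
    have hle : ∑ S ∈ B, lam S * excess v S x ≤ 0 := by
      have : ∀ S ∈ B, lam S * excess v S x ≤ lam S * (∑ i ∈ S, y i) - lam S * (∑ i ∈ S, x i) := by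
        intro S hS
        have h1 : excess v S y ≤ 0 := hyc S (hB S hS).1
        have : excess v S x ≤ (∑ i ∈ S, y i) - (∑ i ∈ S, x i) := by
          simp only [excess] at h1 ⊢; linarith
        calc lam S * excess v S x ≤ lam S * ((∑ i ∈ S, y i) - (∑ i ∈ S, x i)) :=
              mul_le_mul_of_nonneg_left this (hpos S hS).le
          _ = _ := by ring
      calc ∑ S ∈ B, lam S * excess v S x
          ≤ ∑ S ∈ B, (lam S * (∑ i ∈ S, y i) - lam S * (∑ i ∈ S, x i)) :=
            Finset.sum_le_sum this
        _ = 0 := by rw [Finset.sum_sub_distrib, hx', hy']; ring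
    linarith
end
end

section
/- For a balanced game (N, v) with v(N) = 0, the core C(v) equals the zero set of the cohesion field: C(v) = {x ∈ X : φ(x) = 0}, where φ(x) = ∑_{S∈𝓝} max(0, v(S) - x(S))·η^S. -/
open Finset
open scoped RealInnerProductSpace

noncomputable section
variable {N : Type*} [Fintype N] [DecidableEq N]

theorem stmt_8 [Nonempty N] (v : Finset N → ℝ) (hv : v univ = 0)
    (hbal : (core v).Nonempty) :
    core v = {x : EuclideanSpace ℝ N | (∑ i, x i) = 0 ∧ phi v x = 0} := by
  obtain ⟨y, hy0, hyc⟩ := hbal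
  ext x
  simp only [Set.mem_setOf_eq, core]
  constructor
  · rintro ⟨hx0, hxe⟩
    refine ⟨hx0, ?_⟩
    unfold phi
    apply Finset.sum_eq_zero
    intro S hS
    simp only [mem_filter, mem_univ, true_and] at hS
    have h := hxe S (Finset.nonempty_iff_ne_empty.mpr hS)
    rw [max_eq_left h, zero_smul]
  · rintro ⟨hx0, hphi⟩
    refine ⟨hx0, fun S hSne => ?_⟩
    set c : Finset N → ℝ := fun T => max 0 (excess v T x) with hc
    have hd0 : ∑ i, (y i - x i) = 0 := by
      rw [Finset.sum_sub_distrib, hy0, hx0, sub_zero]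
    have hphi' : ∀ i : N, (∑ T ∈ univ.filter (· ≠ (∅:Finset N)), c T * eta T i) = 0 := by
      intro i
      have h2 : (∑ T ∈ univ.filter (· ≠ (∅:Finset N)),
          (fun T => max 0 (excess v T x) • eta T) T i) = 0 :=
        (Finset.sum_apply i (univ.filter (· ≠ (∅:Finset N)))
          (fun T => max 0 (excess v T x) • eta T)).symm.trans (by have := congrArg (fun z : EuclideanSpace ℝ N => z i) hphi; simpa [phi] using this)
      simpa [PiLp.smul_apply, smul_eq_mul, hc] using h2
    have key : ∀ T : Finset N, ∑ i, (y i - x i) * eta T i = ∑ i ∈ T, (y i - x i) := by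
      intro T
      have h1 : ∀ i : N, (y i - x i) * eta T i
          = (if i ∈ T then (y i - x i) else 0)
              - (y i - x i) * ((T.card : ℝ) / (Fintype.card N)) := by
        intro i; by_cases h : i ∈ T <;> simp [eta, h, mul_sub]
      rw [Finset.sum_congr rfl (fun i _ => h1 i), Finset.sum_sub_distrib,
        ← Finset.sum_mul, hd0, zero_mul, sub_zero, Finset.sum_ite_mem, Finset.univ_inter]
    have hA : ∑ T ∈ univ.filter (· ≠ (∅:Finset N)), c T * (∑ i ∈ T, (y i - x i)) = 0 := by
      calc ∑ T ∈ univ.filter (· ≠ (∅:Finset N)), c T * (∑ i ∈ T, (y i - x i))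
          = ∑ T ∈ univ.filter (· ≠ (∅:Finset N)), ∑ i, (y i - x i) * (c T * eta T i) := by
            apply Finset.sum_congr rfl; intro T _
            rw [← key T, Finset.mul_sum]
            apply Finset.sum_congr rfl; intro i _; ring
        _ = ∑ i, ∑ T ∈ univ.filter (· ≠ (∅:Finset N)), (y i - x i) * (c T * eta T i) :=
            Finset.sum_comm
        _ = ∑ i, (y i - x i) * (∑ T ∈ univ.filter (· ≠ (∅:Finset N)), c T * eta T i) := by
            apply Finset.sum_congr rfl; intro i _; rw [Finset.mul_sum]
        _ = 0 := by simp [hphi']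
    have hterm : ∀ T ∈ univ.filter (· ≠ (∅:Finset N)),
        (c T)^2 ≤ c T * (∑ i ∈ T, (y i - x i)) := by
      intro T hT
      simp only [mem_filter, mem_univ, true_and] at hT
      have hTne := Finset.nonempty_iff_ne_empty.mpr hT
      have h1 : c T * excess v T x = (c T)^2 := by
        rcases le_or_gt (excess v T x) 0 with h | h
        · simp [hc, max_eq_left h]
        · rw [hc]; simp only [max_eq_right h.le]; ring
      have hsplit : ∑ i ∈ T, (y i - x i) = (∑ i ∈ T, y i - v T) + excess v T x := by
        rw [Finset.sum_sub_distrib, excess]; ring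
      rw [hsplit, mul_add, h1]
      have : 0 ≤ c T * (∑ i ∈ T, y i - v T) := by
        apply mul_nonneg (le_max_left _ _)
        have := hyc T hTne
        rw [excess] at this; linarith
      linarith
    have hnn : ∀ T ∈ univ.filter (· ≠ (∅:Finset N)),
        0 ≤ c T * (∑ i ∈ T, (y i - x i)) := fun T hT =>
      le_trans (sq_nonneg _) (hterm T hT)
    have hSf : S ∈ univ.filter (· ≠ (∅:Finset N)) := by
      simp [Finset.nonempty_iff_ne_empty.mp hSne]
    have hz := (Finset.sum_eq_zero_iff_of_nonneg hnn).mp hA S hSf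
    have hc2 : (c S)^2 ≤ 0 := by rw [← hz]; exact hterm S hSf
    have : c S = 0 := by nlinarith [sq_nonneg (c S)]
    by_contra h
    push_neg at h
    rw [hc] at this
    simp only [max_eq_right h.le] at this
    exact absurd this (ne_of_gt h)
end
end

section
/- If a nonempty collection 𝓒 of coalitions is unbalanced (contains no balanced subcollection), then for any positive weights θ_S > 0 (S ∈ 𝓒), the sum ∑_{S∈𝓒} θ_S η^S is nonzero. -/
open Finset
open scoped RealInnerProductSpace

noncomputable section
variable {N : Type*} [Fintype N] [DecidableEq N]

theorem stmt_9 [Nonempty N] (C : Finset (Finset N)) (hC : C.Nonempty)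
    (hCne : ∀ S ∈ C, S.Nonempty)
    (hunb : ∀ B ⊆ C, ¬ IsBalancedColl B)
    (θ : Finset N → ℝ) (hθ : ∀ S ∈ C, 0 < θ S) :
    ∑ S ∈ C, θ S • eta S ≠ (0 : EuclideanSpace ℝ N) := by
  intro h
  apply hunb C (subset_refl C)
  have hn : (0:ℝ) < (Fintype.card N : ℝ) := by
    exact_mod_cast Fintype.card_pos
  set c : ℝ := (∑ S ∈ C, θ S * S.card) / (Fintype.card N) with hcdef
  have hc : 0 < c := by
    apply div_pos _ hn
    apply Finset.sum_pos _ hC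
    intro S hS
    have hcard : (0:ℝ) < S.card := by exact_mod_cast (hCne S hS).card_pos
    exact mul_pos (hθ S hS) hcard
  refine ⟨hCne, fun S => θ S / c, fun S hS => div_pos (hθ S hS) hc, ?_⟩
  ext i
  have hsum : (∑ S ∈ C, θ S • eta S) i
      = ∑ S ∈ C, θ S * ((if i ∈ S then (1:ℝ) else 0) - (S.card : ℝ) / (Fintype.card N)) := by
    rw [show (∑ S ∈ C, θ S • eta S) i = ∑ S ∈ C, (θ S • eta S) i from by rw [WithLp.ofLp_sum, Finset.sum_apply]]
    exact Finset.sum_congr rfl fun S _ => rfl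
  have hi0 : (∑ S ∈ C, θ S * ((if i ∈ S then (1:ℝ) else 0) - (S.card : ℝ) / (Fintype.card N))) = 0 := by
    rw [← hsum]
    exact congrFun (congrArg WithLp.ofLp h) i
  have key : ∑ S ∈ C, θ S * (if i ∈ S then (1:ℝ) else 0) = c := by
    have expand : ∑ S ∈ C, θ S * ((if i ∈ S then (1:ℝ) else 0) - (S.card : ℝ) / (Fintype.card N))
        = (∑ S ∈ C, θ S * (if i ∈ S then (1:ℝ) else 0)) - c := by
      rw [hcdef, Finset.sum_div, ← Finset.sum_sub_distrib]
      apply Finset.sum_congr rfl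
      intro S _
      ring
    rw [expand] at hi0
    linarith
  show (∑ S ∈ C, (θ S / c) • indic S) i = indic (univ : Finset N) i
  have hsum2 : (∑ S ∈ C, (θ S / c) • indic S) i
      = ∑ S ∈ C, θ S / c * (if i ∈ S then (1:ℝ) else 0) := by
    rw [show (∑ S ∈ C, (θ S / c) • indic S) i = ∑ S ∈ C, ((θ S / c) • indic S) i from by rw [WithLp.ofLp_sum, Finset.sum_apply]]
    exact Finset.sum_congr rfl fun S _ => rfl
  rw [hsum2]
  simp only [indic, mem_univ, if_true]
  calc ∑ S ∈ C, θ S / c * (if i ∈ S then (1:ℝ) else 0)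
      = (∑ S ∈ C, θ S * (if i ∈ S then (1:ℝ) else 0)) / c := by
        rw [Finset.sum_div]; apply Finset.sum_congr rfl; intro S _; ring
    _ = 1 := by rw [key]; field_simp
end
end

section
/- Along any cohesion curve, the dissatisfaction strictly decreases outside the core: if γ : ℝ → X satisfies γ'(t) = φ(γ(t)), then for any t with γ(t) ∉ C(v) (for a balanced game), the derivative d/dt ϑ(γ(t)) = -‖φ(γ(t))‖² < 0. -/
open Finset
open scoped RealInnerProductSpace

noncomputable section
variable {N : Type*} [Fintype N] [DecidableEq N]

section Aux
variable {N : Type*} [Fintype N] [DecidableEq N]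

lemma phi_apply (v : Finset N → ℝ) (x : EuclideanSpace ℝ N) (i : N) :
    phi v x i = ∑ S ∈ univ.filter (· ≠ (∅ : Finset N)), max 0 (excess v S x) * eta S i := by
  rw [phi]
  simp [WithLp.ofLp_sum, Finset.sum_apply]

lemma sum_eta [Nonempty N] (S : Finset N) : ∑ i, eta S i = 0 := by
  have h : (Fintype.card N : ℝ) ≠ 0 := Nat.cast_ne_zero.mpr Fintype.card_ne_zero
  simp only [eta, WithLp.ofLp_toLp, Finset.sum_sub_distrib, Finset.sum_ite_mem, Finset.univ_inter,
    Finset.sum_const, nsmul_eq_mul, Finset.card_univ]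
  field_simp
  ring

lemma sum_phi [Nonempty N] (v : Finset N → ℝ) (x : EuclideanSpace ℝ N) :
    ∑ i, phi v x i = 0 := by
  simp only [phi_apply]
  rw [Finset.sum_comm]
  simp [← Finset.mul_sum, sum_eta]

lemma inner_eta (S : Finset N) (w : EuclideanSpace ℝ N) (hw : ∑ i, w i = 0) :
    ⟪eta S, w⟫ = ∑ i ∈ S, w i := by
  simp [eta, PiLp.inner_apply, sub_mul, Finset.sum_sub_distrib, ite_mul, ← Finset.mul_sum, hw, mul_sub, mul_ite, ← Finset.sum_mul,
    Finset.sum_ite_mem, Finset.univ_inter]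

lemma inner_phi (v : Finset N → ℝ) (x w : EuclideanSpace ℝ N) (hw : ∑ i, w i = 0) :
    ⟪phi v x, w⟫ = ∑ S ∈ univ.filter (· ≠ (∅ : Finset N)),
      max 0 (excess v S x) * ∑ i ∈ S, w i := by
  rw [phi, sum_inner]
  simp only [real_inner_smul_left, inner_eta _ _ hw]

lemma hasDerivAt_maxsq (a : ℝ) : HasDerivAt (fun r => (max 0 r)^2) (2 * max 0 a) a := by
  rcases lt_trichotomy a 0 with h | h | h
  · have hc : HasDerivAt (fun _ : ℝ => (0:ℝ)) 0 a := hasDerivAt_const _ _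
    have he : (fun r => (max 0 r)^2) =ᶠ[nhds a] fun _ => (0:ℝ) := by
      filter_upwards [eventually_lt_nhds h] with r hr
      simp [max_eq_left hr.le]
    simpa [max_eq_left h.le] using hc.congr_of_eventuallyEq he
  · subst h
    rw [hasDerivAt_iff_isLittleO]
    simp only [max_self, mul_zero, sub_zero, smul_zero]
    have h1 : (fun r : ℝ => (max 0 r)^2 - 0^2) =O[nhds 0] fun r => r * r := by
      apply Asymptotics.isBigO_of_le
      intro r
      have hm : |max 0 r| ≤ |r| := by
        rw [abs_of_nonneg (le_max_left 0 r)]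
        exact max_le (abs_nonneg r) (le_abs_self r)
      simp only [norm_mul, Real.norm_eq_abs, pow_two, zero_mul, sub_zero, abs_mul]
      exact mul_le_mul hm hm (abs_nonneg _) (abs_nonneg _)
    have h2 : (fun r : ℝ => r * r) =o[nhds 0] fun r => r := by
      have ho : (fun r : ℝ => r) =o[nhds 0] (fun _ => (1:ℝ)) :=
        (Asymptotics.isLittleO_one_iff ℝ).mpr Filter.tendsto_id
      simpa using ho.mul_isBigO (Asymptotics.isBigO_refl (fun r : ℝ => r) (nhds 0))
    exact h1.trans_isLittleO h2
  · have he : (fun r => (max 0 r)^2) =ᶠ[nhds a] fun r => r^2 := by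
      filter_upwards [eventually_gt_nhds h] with r hr
      simp [max_eq_right hr.le]
    simpa [max_eq_right h.le] using ((hasDerivAt_pow 2 a).congr_of_eventuallyEq he)

end Aux

theorem stmt_13 [Nonempty N] (v : Finset N → ℝ) (hv : v univ = 0)
    (hbal : (core v).Nonempty) (γ : ℝ → EuclideanSpace ℝ N)
    (hγX : ∀ t, (∑ i, γ t i) = 0)
    (hγ : ∀ t, HasDerivAt γ (phi v (γ t)) t)
    (t : ℝ) (ht : γ t ∉ core v) :
    HasDerivAt (fun s => dissat v (γ s)) (-‖phi v (γ t)‖^2) t ∧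
      -‖phi v (γ t)‖^2 < 0 := by

  classical
  set x := γ t with hxdef
  -- coordinate derivatives
  have hcoord : ∀ i : N, HasDerivAt (fun s => γ s i) (phi v x i) t := by
    intro i
    have := (EuclideanSpace.proj i (𝕜 := ℝ)).hasFDerivAt.comp_hasDerivAt t (hγ t)
    exact this
  have hS : ∀ S : Finset N, HasDerivAt (fun s => (max 0 (excess v S (γ s)))^2)
      (2 * max 0 (excess v S x) * -∑ i ∈ S, phi v x i) t := by
    intro S
    have hsum : HasDerivAt (fun s => ∑ i ∈ S, γ s i) (∑ i ∈ S, phi v x i) t :=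
      HasDerivAt.fun_sum (fun i _ => hcoord i)
    have hexc : HasDerivAt (fun s => excess v S (γ s)) (-∑ i ∈ S, phi v x i) t := by
      simpa [excess] using hsum.const_sub (v S)
    exact (hasDerivAt_maxsq (excess v S x)).comp t hexc
  have hsumsq : HasDerivAt
      (fun s => ∑ S ∈ univ.filter (· ≠ (∅ : Finset N)), (max 0 (excess v S (γ s)))^2)
      (∑ S ∈ univ.filter (· ≠ (∅ : Finset N)),
        2 * max 0 (excess v S x) * -∑ i ∈ S, phi v x i) t :=
    HasDerivAt.fun_sum (fun S _ => hS S)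
  have hdiss : HasDerivAt (fun s => dissat v (γ s))
      ((1/2) * ∑ S ∈ univ.filter (· ≠ (∅ : Finset N)),
        2 * max 0 (excess v S x) * -∑ i ∈ S, phi v x i) t := by
    simpa [dissat] using hsumsq.const_mul (1/2 : ℝ)
  have key : ‖phi v x‖^2 = ∑ S ∈ univ.filter (· ≠ (∅ : Finset N)),
      max 0 (excess v S x) * ∑ i ∈ S, phi v x i := by
    rw [← real_inner_self_eq_norm_sq]
    exact inner_phi v x _ (sum_phi v x)
  have hval : (1/2 : ℝ) * ∑ S ∈ univ.filter (· ≠ (∅ : Finset N)),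
      2 * max 0 (excess v S x) * -∑ i ∈ S, phi v x i = -‖phi v x‖^2 := by
    rw [key, Finset.mul_sum, ← Finset.sum_neg_distrib]
    exact Finset.sum_congr rfl fun S _ => by ring
  have hder : HasDerivAt (fun s => dissat v (γ s)) (-‖phi v x‖^2) t := hval ▸ hdiss
  -- negativity
  obtain ⟨y, hy0, hyc⟩ := hbal
  have hex : ∃ S : Finset N, S.Nonempty ∧ 0 < excess v S x := by
    by_contra hcon
    push_neg at hcon
    exact ht ⟨hγX t, hcon⟩
  obtain ⟨S₀, hS₀ne, hS₀⟩ := hex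
  have hw : ∑ i, (y - x) i = 0 := by
    simp [Finset.sum_sub_distrib, hy0, hxdef, hγX t]
  have hwS : ∀ S : Finset N, S.Nonempty → excess v S x ≤ ∑ i ∈ S, (y - x) i := by
    intro S hSne
    have h1 : v S - ∑ i ∈ S, y i ≤ 0 := hyc S hSne
    have : ∑ i ∈ S, (y - x) i = ∑ i ∈ S, y i - ∑ i ∈ S, x i := by
      simp [Finset.sum_sub_distrib]
    rw [this, excess]
    linarith [h1]
  have hpos : 0 < ⟪phi v x, y - x⟫ := by
    rw [inner_phi v x _ hw]
    apply Finset.sum_pos'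
    · intro S hSf
      rcases le_or_gt (excess v S x) 0 with h | h
      · simp [max_eq_left h]
      · have hSne : S.Nonempty := Finset.nonempty_iff_ne_empty.mpr
          (by simpa using (Finset.mem_filter.mp hSf).2)
        exact mul_nonneg (le_max_left _ _) (le_trans h.le (hwS S hSne))
    · refine ⟨S₀, Finset.mem_filter.mpr ⟨Finset.mem_univ _, by simpa using hS₀ne.ne_empty⟩, ?_⟩
      exact mul_pos (lt_max_of_lt_right hS₀) (lt_of_lt_of_le hS₀ (hwS S₀ hS₀ne))
  have hne : phi v x ≠ 0 := by
    intro h0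
    rw [h0, inner_zero_left] at hpos
    exact lt_irrefl _ hpos
  have hnorm : 0 < ‖phi v x‖^2 := pow_pos (norm_pos_iff.mpr hne) 2
  exact ⟨hder, by linarith⟩
end
end

section
/- The dissatisfaction field ϑ is uniformly unbounded on X: for every α > 0 there exists a compact set K ⊆ X such that ϑ(x) ≥ α for all x ∈ X \ K. In particular, for ε > 0, every x outside the ε-core C_ε(v) satisfies ϑ(x) > ε²/2. -/
open Finset
open scoped RealInnerProductSpace

noncomputable section
variable {N : Type*} [Fintype N] [DecidableEq N]

lemma half_sq_le_dissat (v : Finset N → ℝ) (x : EuclideanSpace ℝ N) (S : Finset N)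
    (hS : S.Nonempty) :
    (1/2) * (max 0 (excess v S x))^2 ≤ dissat v x := by
  unfold dissat
  have hmem : S ∈ univ.filter (· ≠ (∅ : Finset N)) := by
    simp [Finset.mem_filter, hS.ne_empty]
  have h := Finset.single_le_sum
    (f := fun T => (max 0 (excess v T x))^2)
    (fun T _ => sq_nonneg _) hmem
  linarith

theorem stmt_15 [Nonempty N] (v : Finset N → ℝ) (hv : v univ = 0)
    (hbal : (core v).Nonempty) :
    (∀ α > (0:ℝ), ∃ K : Set (EuclideanSpace ℝ N),
        K ⊆ {x | (∑ i, x i) = 0} ∧ IsCompact K ∧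
        ∀ x : EuclideanSpace ℝ N, (∑ i, x i) = 0 → x ∉ K → α ≤ dissat v x) ∧
      ∀ ε > (0:ℝ), ∀ x : EuclideanSpace ℝ N, (∑ i, x i) = 0 →
        (∃ S : Finset N, S.Nonempty ∧ S ≠ univ ∧ (∑ i ∈ S, x i) < v S - ε) →
          ε^2 / 2 < dissat v x := by
  have hcont : ∀ S : Finset N, Continuous fun x : EuclideanSpace ℝ N => ∑ i ∈ S, x i :=
    fun S => continuous_finset_sum S fun i _ => (EuclideanSpace.proj i).continuous
  constructor
  · intro α hα
    set c := Real.sqrt (2 * α) with hc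
    have hc0 : 0 ≤ c := Real.sqrt_nonneg _
    have hc2 : c ^ 2 = 2 * α := Real.sq_sqrt (by linarith)
    refine ⟨{x | (∑ i, x i) = 0 ∧ ∀ S : Finset N, S.Nonempty → excess v S x ≤ c},
      fun x hx => hx.1, ?_, ?_⟩
    · -- compactness
      have hclosed : IsClosed {x : EuclideanSpace ℝ N |
          (∑ i, x i) = 0 ∧ ∀ S : Finset N, S.Nonempty → excess v S x ≤ c} := by
        have h1 : IsClosed {x : EuclideanSpace ℝ N | (∑ i, x i) = 0} :=
          isClosed_eq (hcont univ) continuous_const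
        have h2 : IsClosed {x : EuclideanSpace ℝ N |
            ∀ S : Finset N, S.Nonempty → excess v S x ≤ c} := by
          have heq : {x : EuclideanSpace ℝ N | ∀ S : Finset N, S.Nonempty → excess v S x ≤ c}
              = ⋂ S : Finset N, ⋂ _ : S.Nonempty, {x | excess v S x ≤ c} := by
            ext x; simp [Set.mem_iInter]
          rw [heq]
          refine isClosed_iInter fun S => isClosed_iInter fun _ => ?_
          have : Continuous fun x : EuclideanSpace ℝ N => excess v S x := by
            unfold excess
            exact continuous_const.sub (hcont S)
          exact isClosed_le this continuous_const
        exact h1.inter h2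
      have hbdd : Bornology.IsBounded {x : EuclideanSpace ℝ N |
          (∑ i, x i) = 0 ∧ ∀ S : Finset N, S.Nonempty → excess v S x ≤ c} := by
        rw [isBounded_iff_forall_norm_le]
        set M : ℝ := ∑ j : N, |v {j} - c| with hM
        have hM0 : 0 ≤ M := Finset.sum_nonneg fun j _ => abs_nonneg _
        refine ⟨Real.sqrt ((Fintype.card N : ℝ) * M ^ 2), ?_⟩
        rintro x ⟨hsum, hexc⟩
        have hlow : ∀ j : N, v {j} - c ≤ x j := by
          intro j
          have h := hexc {j} (Finset.singleton_nonempty j)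
          unfold excess at h
          simp only [Finset.sum_singleton] at h
          linarith
        have habsM : ∀ j : N, |v {j} - c| ≤ M :=
          fun j => Finset.single_le_sum (f := fun j => |v {j} - c|)
            (fun k _ => abs_nonneg _) (Finset.mem_univ j)
        have hcoord : ∀ i : N, |x i| ≤ M := by
          intro i
          rw [abs_le]
          constructor
          · have := neg_abs_le (v {i} - c)
            have := habsM i
            have := hlow i
            linarith
          · have hsplit : (∑ j ∈ univ.erase i, x j) + x i = ∑ j : N, x j :=
              Finset.sum_erase_add univ x (Finset.mem_univ i)
            have h1 : ∑ j ∈ univ.erase i, (v {j} - c) ≤ ∑ j ∈ univ.erase i, x j :=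
              Finset.sum_le_sum fun j _ => hlow j
            have h2 : ∑ j ∈ univ.erase i, (-|v {j} - c|) ≤ ∑ j ∈ univ.erase i, (v {j} - c) :=
              Finset.sum_le_sum fun j _ => neg_abs_le _
            have h3 : ∑ j ∈ univ.erase i, |v {j} - c| ≤ M :=
              Finset.sum_le_sum_of_subset_of_nonneg (Finset.erase_subset _ _)
                (fun j _ _ => abs_nonneg _)
            rw [Finset.sum_neg_distrib] at h2
            linarith
        rw [EuclideanSpace.norm_eq]
        apply Real.sqrt_le_sqrt
        calc ∑ i : N, ‖x i‖ ^ 2 ≤ ∑ _i : N, M ^ 2 := by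
              apply Finset.sum_le_sum
              intro i _
              rw [Real.norm_eq_abs]
              exact pow_le_pow_left₀ (abs_nonneg _) (hcoord i) 2
          _ = (Fintype.card N : ℝ) * M ^ 2 := by
              rw [Finset.sum_const, nsmul_eq_mul, Finset.card_univ]
      exact Metric.isCompact_of_isClosed_isBounded hclosed hbdd
    · intro x hsum hxK
      simp only [Set.mem_setOf_eq, not_and, not_forall] at hxK
      obtain ⟨S, hS, hgt⟩ := hxK hsum
      push_neg at hgt
      have h1 : c ≤ max 0 (excess v S x) := le_trans (le_of_lt hgt) (le_max_right _ _)
      have h2 : c ^ 2 ≤ (max 0 (excess v S x)) ^ 2 := pow_le_pow_left₀ hc0 h1 2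
      have h3 := half_sq_le_dissat v x S hS
      nlinarith
  · rintro ε hε x hsum ⟨S, hS, _, hlt⟩
    have he : ε < excess v S x := by unfold excess; linarith
    have h1 : ε ^ 2 < (max 0 (excess v S x)) ^ 2 := by
      have h : ε < max 0 (excess v S x) := lt_of_lt_of_le he (le_max_right _ _)
      nlinarith
    have h2 := half_sq_le_dissat v x S hS
    nlinarith
end
end
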